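/- Strong maximum principle, boundary point lemma at the left endpoint (Theorem 2.1(ii)). Let g : (α,ω) × ℝ × ℝ → ℝ be an arbitrary function and let v ∈ W^{2,1}_loc(α,ω) ∩ W^{1,1}(α,ω) be a nonnegative function, not identically zero, with v''(t) = g(t, v(t), v'(t)) for almost every t ∈ (α,ω). Assume condition (G): there exist a constant ε > 0 and an absolutely continuous function G : [0,ε] → ℝ such that 0 ≤ g(t, v(t), v'(t)) ≤ G'(v(t)) for almost every t ∈ (α,ω) at which 0 < v(t) ≤ ε and |v'(t)| ≤ ε, and either G(s) = 0 for all s ∈ (0,ε], or G(s) > 0 for all s ∈ (0,ε] and ∫₀^ε ds/√(G(s)) = +∞. If the continuous extension of v to [α,ω] satisfies v(α) = 0 and the limit v'(α⁺) = lim_{t→α⁺} v'(t) exists in ℝ, then v'(α⁺) > 0. -/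

import Mathlib

open Set Filter MeasureTheory Topology


lemma sq_setIntegral_Ioc {f : ℝ → ℝ} {c t : ℝ} (hct : c ≤ t)
    (hf : IntegrableOn f (Ioc c t)) :
    (∫ s in Ioc c t, f s) ^ 2 = 2 * ∫ u in Ioc c t, f u * ∫ s in Ioc c u, f s := by
  set μ := volume.restrict (Ioc c t) with hμ
  have hfμ : Integrable f μ := hf
  set F : ℝ → ℝ := fun u => ∫ s in Ioc c u, f s with hF
  set T : ℝ := ∫ s in Ioc c t, f s with hT
  set k : ℝ → ℝ → ℝ := fun u s => if s ≤ u then f u * f s else 0 with hk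
  have hmeas : MeasurableSet {p : ℝ × ℝ | p.2 ≤ p.1} :=
    (isClosed_le continuous_snd continuous_fst).measurableSet
  have hkint : Integrable (Function.uncurry k) (μ.prod μ) := by
    have hbase : Integrable (fun p : ℝ × ℝ => f p.1 * f p.2) (μ.prod μ) :=
      hfμ.mul_prod hfμ
    have : Function.uncurry k = {p : ℝ × ℝ | p.2 ≤ p.1}.indicator
        (fun p : ℝ × ℝ => f p.1 * f p.2) := by
      ext p
      by_cases h : p.2 ≤ p.1 <;>
        simp [Function.uncurry, hk, h, Set.indicator_of_mem, Set.indicator_of_notMem,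
          Set.mem_setOf_eq]
    rw [this]
    exact hbase.indicator hmeas
  -- inner integral in s
  have inner1 : ∀ u ∈ Ioc c t, (∫ s, k u s ∂μ) = f u * F u := by
    intro u hu
    have h1 : (fun s => k u s) = (Iic u).indicator (fun s => f u * f s) := by
      ext s
      by_cases h : s ≤ u <;> simp [hk, h]
    rw [h1, hμ, integral_indicator measurableSet_Iic,
      Measure.restrict_restrict measurableSet_Iic]
    have h2 : Iic u ∩ Ioc c t = Ioc c u := by
      ext s; simp only [mem_inter_iff, mem_Iic, mem_Ioc]
      constructor
      · rintro ⟨h1', h2', _⟩; exact ⟨h2', h1'⟩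
      · rintro ⟨h1', h2'⟩; exact ⟨h2', h1', h2'.trans hu.2⟩
    rw [h2, integral_const_mul]
  -- inner integral in u
  have inner2 : ∀ s ∈ Ioc c t, (∫ u, k u s ∂μ) = f s * (T - F s) := by
    intro s hs
    have h1 : (fun u => k u s) = (Ici s).indicator (fun u => f u * f s) := by
      ext u
      by_cases h : s ≤ u <;> simp [hk, h]
    rw [h1, hμ, integral_indicator measurableSet_Ici,
      Measure.restrict_restrict measurableSet_Ici]
    have h2 : Ici s ∩ Ioc c t = Icc s t := by
      ext u; simp only [mem_inter_iff, mem_Ici, mem_Ioc, mem_Icc]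
      constructor
      · rintro ⟨h1', _, h3'⟩; exact ⟨h1', h3'⟩
      · rintro ⟨h1', h2'⟩; exact ⟨h1', hs.1.trans_le h1', h2'⟩
    have h3 : ∫ u in Icc s t, f u * f s = (∫ u in Ioc s t, f u) * f s := by
      rw [integral_Icc_eq_integral_Ioc, integral_mul_const]
    have h4 : F s + ∫ u in Ioc s t, f u = T := by
      rw [hF, hT, ← setIntegral_union ((Set.Ioc_disjoint_Ioc_of_le le_rfl)) measurableSet_Ioc
        (hf.mono_set (Set.Ioc_subset_Ioc_right hs.2)) (hf.mono_set (Set.Ioc_subset_Ioc_left hs.1.le)),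
        Set.Ioc_union_Ioc_eq_Ioc hs.1.le hs.2]
    rw [h2, h3]
    have : (∫ u in Ioc s t, f u) = T - F s := by linarith [h4]
    rw [this]; ring
  -- boundedness / integrability of f * F
  set F' : ℝ → ℝ := fun u => ∫ s in Ioc c (min u t), f s with hF'
  have hF'eq : ∀ u ∈ Ioc c t, F' u = F u := by
    intro u hu
    simp only [hF', hF, min_eq_left hu.2]
  have hFcont : ContinuousOn F' (Ioc c t) := by
    have h0 : ContinuousOn (fun x => ∫ s in Ioc c x, f s) (Icc c t) :=
      intervalIntegral.continuousOn_primitive (μ := volume)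
        ((integrableOn_Icc_iff_integrableOn_Ioc).mpr hf)
    exact (h0.comp ((continuous_id.min continuous_const).continuousOn)
      (fun x hx => ⟨le_min hx.1 hct, min_le_right _ _⟩)).mono
        Ioc_subset_Icc_self
  have hFmeas : AEStronglyMeasurable F' μ := hFcont.aestronglyMeasurable measurableSet_Ioc
  have hFbdd : ∃ C, ∀ u, ‖F' u‖ ≤ C := by
    refine ⟨∫ s in Ioc c t, ‖f s‖, fun u => ?_⟩
    calc ‖∫ s in Ioc c (min u t), f s‖ ≤ ∫ s in Ioc c (min u t), ‖f s‖ :=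
          norm_integral_le_integral_norm f
      _ ≤ ∫ s in Ioc c t, ‖f s‖ := by
          apply setIntegral_mono_set hf.norm
          · exact Filter.Eventually.of_forall fun x => norm_nonneg _
          · exact HasSubset.Subset.eventuallyLE (Set.Ioc_subset_Ioc_right (min_le_right u t))
  have hfFint : Integrable (fun u => f u * F u) μ := by
    have h1 := hfμ.bdd_mul hFmeas (c := hFbdd.choose) (Filter.Eventually.of_forall hFbdd.choose_spec)
    have h2 : Integrable (fun u => f u * F' u) μ :=
      h1.congr (Filter.Eventually.of_forall fun x => mul_comm _ _)
    apply h2.congr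
    rw [hμ]
    filter_upwards [ae_restrict_mem measurableSet_Ioc] with x hx
    rw [hF'eq x hx]
  -- Fubini
  have swap : (∫ u, ∫ s, k u s ∂μ ∂μ) = ∫ s, ∫ u, k u s ∂μ ∂μ :=
    integral_integral_swap hkint
  have lhs : (∫ u, ∫ s, k u s ∂μ ∂μ) = ∫ u, f u * F u ∂μ := by
    rw [hμ]
    exact setIntegral_congr_fun measurableSet_Ioc inner1
  have rhs : (∫ s, ∫ u, k u s ∂μ ∂μ) = T * T - ∫ u, f u * F u ∂μ := by
    rw [hμ]
    rw [setIntegral_congr_fun measurableSet_Ioc inner2]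
    have : (fun s => f s * (T - F s)) = fun s => f s * T - f s * F s := by
      ext s; ring
    rw [this, integral_sub (hfμ.mul_const T) hfFint, integral_mul_const]
  have hA : T * T = 2 * ∫ u, f u * F u ∂μ := by linarith [lhs, swap, rhs]
  rw [pow_two]
  exact hA

lemma change_var {v v' : ℝ → ℝ} {β t : ℝ} (hβt : β < t)
    (hder : ∀ x ∈ Ioo β t, HasDerivAt v (v' x) x)
    (hv'cont : ContinuousOn v' (Ioo β t))
    (hv'nn : ∀ x ∈ Ioc β t, 0 ≤ v' x)
    (hvpos : ∀ x ∈ Ioc β t, 0 < v x)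
    (hvβ : v β = 0)
    (hcont : ContinuousOn v (Icc β t))
    (hv'int : IntegrableOn v' (Ioc β t))
    (hvdiff : ∀ a b, β ≤ a → a ≤ b → b ≤ t → v b - v a = ∫ s in Ioc a b, v' s)
    (g : ℝ → ℝ) :
    (IntegrableOn (fun x => v' x * g (v x)) (Ioo β t) ↔ IntegrableOn g (Ioo 0 (v t))) ∧
      (∫ x in Ioo β t, v' x * g (v x)) = ∫ r in Ioo 0 (v t), g r := by
  set U : Set ℝ := Ioo β t ∩ v' ⁻¹' (Ioi 0) with hU
  have hUsub : U ⊆ Ioo β t := inter_subset_left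
  have hUopen : IsOpen U := hv'cont.isOpen_inter_preimage isOpen_Ioo isOpen_Ioi
  have hUmeas : MeasurableSet U := hUopen.measurableSet
  -- strict increase from points with positive derivative
  have hSI : ∀ x ∈ U, ∀ y, x < y → y ≤ t → v x < v y := by
    intro x hx y hxy hyt
    have hx1 : β < x := hx.1.1
    have hv'x : (0:ℝ) < v' x := hx.2
    have hCA : ContinuousAt v' x := hv'cont.continuousAt (isOpen_Ioo.mem_nhds hx.1)
    have hev : ∀ᶠ z in 𝓝 x, v' x / 2 < v' z :=
      hCA.eventually (eventually_gt_nhds (half_lt_self hv'x))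
    obtain ⟨l, u, hxlu, hsub⟩ := mem_nhds_iff_exists_Ioo_subset.mp hev
    set z : ℝ := (x + min u y) / 2 with hz
    have hxu : x < u := hxlu.2
    have hxminuy : x < min u y := lt_min hxu hxy
    have hxz : x < z := by rw [hz]; linarith
    have hzmin : z < min u y := by rw [hz]; linarith
    have hzu : z < u := hzmin.trans_le (min_le_left _ _)
    have hzy : z < y := hzmin.trans_le (min_le_right _ _)
    have hzt : z ≤ t := hzy.le.trans hyt
    have key : v y - v x = ∫ s in Ioc x y, v' s := hvdiff x y hx1.le hxy.le hyt
    have hsplit : Ioc x y = Ioc x z ∪ Ioc z y := (Set.Ioc_union_Ioc_eq_Ioc hxz.le hzy.le).symm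
    have hint1 : IntegrableOn v' (Ioc x z) :=
      hv'int.mono_set (Set.Ioc_subset_Ioc hx1.le hzt)
    have hint2 : IntegrableOn v' (Ioc z y) :=
      hv'int.mono_set (Set.Ioc_subset_Ioc (hx1.trans hxz).le hyt)
    have hsum : (∫ s in Ioc x y, v' s)
        = (∫ s in Ioc x z, v' s) + ∫ s in Ioc z y, v' s := by
      rw [hsplit]
      exact setIntegral_union (Set.Ioc_disjoint_Ioc_of_le le_rfl) measurableSet_Ioc hint1 hint2
    have h2 : (0:ℝ) ≤ ∫ s in Ioc z y, v' s :=
      setIntegral_nonneg measurableSet_Ioc fun s hs =>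
        hv'nn s ⟨hx1.trans (hxz.trans_le hs.1.le), hs.2.trans hyt⟩
    have h1 : (z - x) * (v' x / 2) ≤ ∫ s in Ioc x z, v' s := by
      have hc : (∫ _s in Ioc x z, (v' x / 2)) = (z - x) * (v' x / 2) := by
        simp [Real.volume_Ioc, ENNReal.toReal_ofReal (by linarith : (0:ℝ) ≤ z - x), hxz.le]
      rw [← hc]
      refine setIntegral_mono_on ((integrableOn_const_iff enorm_ne_top).mpr (Or.inr ?_)) hint1
        measurableSet_Ioc fun s hs => (hsub ⟨hxlu.1.trans hs.1, hs.2.trans_lt hzu⟩).le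
      rw [Real.volume_Ioc]
      exact ENNReal.ofReal_lt_top
    have hpos : 0 < (z - x) * (v' x / 2) := by
      apply mul_pos (by linarith) (by linarith)
    linarith
  have hinj : InjOn v U := by
    intro a ha b hb hab
    rcases lt_trichotomy a b with h | h | h
    · exact absurd hab (ne_of_lt (hSI a ha b h hb.1.2.le))
    · exact h
    · exact absurd hab.symm (ne_of_lt (hSI b hb a h ha.1.2.le))
  have hderW : ∀ x ∈ U, HasDerivWithinAt v (v' x) U x :=
    fun x hx => (hder x hx.1).hasDerivWithinAt
  have himg : v '' U ⊆ Ioo 0 (v t) := by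
    rintro _ ⟨x, hx, rfl⟩
    exact ⟨hvpos x ⟨hx.1.1, hx.1.2.le⟩, hSI x hx t hx.1.2 le_rfl⟩
  have hIVT : Ioo 0 (v t) ⊆ v '' Ioo β t := by
    have h0 := intermediate_value_Ioo hβt.le hcont
    rw [hvβ] at h0
    exact h0
  have hnull : volume (v '' (Ioo β t \ U)) = 0 := by
    have hz : ∀ x ∈ Ioo β t \ U, v' x = 0 := by
      intro x hx
      have h1 : ¬ (0 < v' x) := fun hc => hx.2 ⟨hx.1, hc⟩
      exact le_antisymm (not_lt.mp h1) (hv'nn x ⟨hx.1.1, hx.1.2.le⟩)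
    refine addHaar_image_eq_zero_of_det_fderivWithin_eq_zero volume
      (f' := fun _ => (0 : ℝ →L[ℝ] ℝ)) (fun x hx => ?_) (fun x hx => ?_)
    · have := (hder x hx.1).hasDerivWithinAt.hasFDerivWithinAt
        (s := Ioo β t \ U)
      rw [hz x hx, ContinuousLinearMap.toSpanSingleton_zero] at this
      exact this
    · simp [ContinuousLinearMap.det]
  have hsetae : v '' U =ᵐ[volume] Ioo 0 (v t) := by
    rw [MeasureTheory.ae_eq_set]
    constructor
    · rw [Set.diff_eq_empty.mpr himg]; exact measure_empty
    · refine measure_mono_null (fun r hr => ?_) hnull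
      obtain ⟨x, hx, rfl⟩ := hIVT hr.1
      exact ⟨x, ⟨hx, fun hxU => hr.2 (mem_image_of_mem v hxU)⟩, rfl⟩
  have hiff0 := integrableOn_image_iff_integrableOn_abs_deriv_smul hUmeas hderW hinj g
  have hval0 := integral_image_eq_integral_abs_deriv_smul hUmeas hderW hinj g
  have hcongrU : EqOn (fun x => |v' x| • g (v x)) (fun x => v' x * g (v x)) U := by
    intro x hx
    simp [abs_of_pos (show (0:ℝ) < v' x from hx.2), smul_eq_mul]
  have hzeroeq : EqOn (fun x => v' x * g (v x)) (fun _ => (0:ℝ)) (Ioo β t \ U) := by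
    intro x hx
    have h1 : ¬ (0 < v' x) := fun hc => hx.2 ⟨hx.1, hc⟩
    have h2 : v' x = 0 :=
      le_antisymm (not_lt.mp h1) (hv'nn x ⟨hx.1.1, hx.1.2.le⟩)
    simp [h2]
  have hs0meas : MeasurableSet (Ioo β t \ U) := measurableSet_Ioo.diff hUmeas
  have hunion : U ∪ (Ioo β t \ U) = Ioo β t := Set.union_diff_cancel hUsub
  have hiff : IntegrableOn (fun x => v' x * g (v x)) (Ioo β t)
      ↔ IntegrableOn g (Ioo 0 (v t)) := by
    constructor
    · intro hInt
      have h1 : IntegrableOn (fun x => |v' x| • g (v x)) U :=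
        ((hInt.mono_set hUsub).congr_fun hcongrU.symm hUmeas)
      have h2 : IntegrableOn g (v '' U) := hiff0.mpr h1
      exact h2.congr_set_ae hsetae.symm
    · intro hgI
      have h2 : IntegrableOn g (v '' U) := hgI.congr_set_ae hsetae
      have h1 : IntegrableOn (fun x => v' x * g (v x)) U :=
        (hiff0.mp h2).congr_fun hcongrU hUmeas
      have h3 : IntegrableOn (fun x => v' x * g (v x)) (Ioo β t \ U) :=
        (integrableOn_zero.congr_fun hzeroeq.symm hs0meas)
      have := h1.union h3
      rwa [hunion] at this
  refine ⟨hiff, ?_⟩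
  by_cases hgI : IntegrableOn g (Ioo 0 (v t))
  · have hInt : IntegrableOn (fun x => v' x * g (v x)) (Ioo β t) := hiff.mpr hgI
    have h1 : IntegrableOn (fun x => v' x * g (v x)) U := hInt.mono_set hUsub
    have h3 : IntegrableOn (fun x => v' x * g (v x)) (Ioo β t \ U) :=
      hInt.mono_set Set.diff_subset
    have hsplit : (∫ x in Ioo β t, v' x * g (v x))
        = (∫ x in U, v' x * g (v x)) + ∫ x in Ioo β t \ U, v' x * g (v x) := by
      have h4 := setIntegral_union (f := fun x => v' x * g (v x)) (μ := volume)
        disjoint_sdiff_self_right hs0meas h1 h3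
      rw [hunion] at h4
      exact h4
    have hzero : (∫ x in Ioo β t \ U, v' x * g (v x)) = 0 := by
      rw [setIntegral_congr_fun hs0meas hzeroeq]
      simp
    have hmain : (∫ x in U, v' x * g (v x)) = ∫ r in Ioo 0 (v t), g r := by
      rw [← setIntegral_congr_fun hUmeas hcongrU, ← hval0]
      exact setIntegral_congr_set hsetae
    rw [hsplit, hzero, hmain, add_zero]
  · rw [integral_undef hgI, integral_undef (fun hc => hgI (hiff.mp hc))]

/-- **Strong maximum principle, boundary point lemma at the left endpoint (Theorem 2.1(ii)).**
`v ∈ W^{2,1}_loc(α,ω) ∩ W^{1,1}(α,ω)` is a nontrivial nonnegative solution of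
`v'' = g(t, v, v')` a.e. in `(α,ω)`; under condition (G), if `v(α) = 0` and `v'(α⁺)` exists, then `v'(α⁺) > 0`. -/
theorem strong_maximum_principle_left_boundary_point
    (α ω : ℝ) (hαω : α < ω)
    (g : ℝ → ℝ → ℝ → ℝ) (v v' v'' : ℝ → ℝ)
    -- v ∈ W^{1,1}(α,ω): v is absolutely continuous on [α,ω] with derivative v' ∈ L¹(α,ω)
    (hv_cont : ContinuousOn v (Icc α ω))
    (hv'_int : IntegrableOn v' (Ioo α ω))
    (hv_ftc : ∀ x ∈ Icc α ω, v x = v α + ∫ t in α..x, v' t)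
    -- v ∈ W^{2,1}_loc(α,ω): v is C¹ on (α,ω) and v' is locally absolutely continuous there,
    -- with almost-everywhere derivative v''
    (hv_deriv : ∀ x ∈ Ioo α ω, HasDerivAt v (v' x) x)
    (hv'_cont : ContinuousOn v' (Ioo α ω))
    (hv'_locAC : ∀ c d : ℝ, α < c → c ≤ d → d < ω →
      IntegrableOn v'' (Icc c d) ∧ ∀ x ∈ Icc c d, v' x = v' c + ∫ t in c..x, v'' t)
    -- v nonnegative and not identically zero
    (hv_nonneg : ∀ t ∈ Icc α ω, 0 ≤ v t)
    (hv_nontriv : ∃ t ∈ Ioo α ω, v t ≠ 0)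
    -- the differential equation v'' = g(t, v, v') a.e. in (α,ω)
    (hode : ∀ᵐ t ∂volume, t ∈ Ioo α ω → v'' t = g t (v t) (v' t))
    -- condition (G): G is absolutely continuous on [0,ε] with a.e. derivative G'
    (hG : ∃ ε > (0:ℝ), ∃ G G' : ℝ → ℝ,
      IntegrableOn G' (Icc 0 ε) ∧
      (∀ s ∈ Icc (0:ℝ) ε, G s = G 0 + ∫ r in (0:ℝ)..s, G' r) ∧
      (∀ᵐ t ∂volume, t ∈ Ioo α ω → 0 < v t → v t ≤ ε → |v' t| ≤ ε →
        0 ≤ g t (v t) (v' t) ∧ g t (v t) (v' t) ≤ G' (v t)) ∧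
      ((∀ s ∈ Ioc (0:ℝ) ε, G s = 0) ∨
        ((∀ s ∈ Ioc (0:ℝ) ε, 0 < G s) ∧
          ¬ IntegrableOn (fun s => 1 / Real.sqrt (G s)) (Ioc 0 ε))))
    -- boundary behavior: v(α) = 0 and v'(α⁺) = L exists
    (hvα : v α = 0)
    (L : ℝ) (hL : Tendsto v' (𝓝[>] α) (𝓝 L)) :
    0 < L := by
  by_contra hL0
  push_neg at hL0
  -- basic integral representation of v
  have hIocsubαω : ∀ a b : ℝ, α ≤ a → b < ω → Ioc a b ⊆ Ioo α ω := by
    intro a b ha hb x hx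
    exact ⟨ha.trans_lt hx.1, hx.2.trans_lt hb⟩
  have hvdiff : ∀ a b, α ≤ a → a ≤ b → b < ω → v b - v a = ∫ s in Ioc a b, v' s := by
    intro a b ha hab hb
    have haω : a < ω := lt_of_le_of_lt hab hb
    have hIa : IntervalIntegrable v' volume α a := by
      rw [intervalIntegrable_iff_integrableOn_Ioc_of_le ha]
      exact hv'_int.mono_set (hIocsubαω α a le_rfl haω)
    have hIb : IntervalIntegrable v' volume α b := by
      rw [intervalIntegrable_iff_integrableOn_Ioc_of_le (ha.trans hab)]
      exact hv'_int.mono_set (hIocsubαω α b le_rfl hb)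
    have h1 := hv_ftc a ⟨ha, haω.le⟩
    have h2 := hv_ftc b ⟨ha.trans hab, hb.le⟩
    have h3 := intervalIntegral.integral_interval_sub_left hIb hIa
    rw [intervalIntegral.integral_of_le hab] at h3
    rw [h1, h2, ← h3]
    ring
  -- Step 0 : 0 ≤ L
  have hLnn : 0 ≤ L := by
    by_contra hneg
    push_neg at hneg
    have hev : ∀ᶠ c in 𝓝[>] α, v' c < L / 2 := hL.eventually (eventually_lt_nhds (by linarith))
    obtain ⟨u, hu, hsub⟩ := mem_nhdsGT_iff_exists_Ioo_subset.mp hev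
    have hαu : α < u := hu
    set x : ℝ := min ((α + u) / 2) ((α + ω) / 2) with hx
    have hαx : α < x := lt_min (by linarith) (by linarith)
    have hxu : x < u := (min_le_left _ _).trans_lt (by linarith)
    have hxω : x < ω := (min_le_right _ _).trans_lt (by linarith)
    have hvx := hvdiff α x le_rfl hαx.le hxω
    rw [hvα, sub_zero] at hvx
    have hle : (∫ s in Ioc α x, v' s) ≤ ∫ _s in Ioc α x, (L / 2) := by
      refine setIntegral_mono_on (hv'_int.mono_set (hIocsubαω α x le_rfl hxω))
        ((integrableOn_const_iff enorm_ne_top).mpr (Or.inr ?_)) measurableSet_Ioc ?_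
      · rw [Real.volume_Ioc]; exact ENNReal.ofReal_lt_top
      · exact fun s hs => (hsub ⟨hs.1, hs.2.trans_lt hxu⟩).le
    have hconst : (∫ _s in Ioc α x, (L / 2 : ℝ)) = (x - α) * (L / 2) := by
      simp [Real.volume_Ioc, ENNReal.toReal_ofReal (by linarith : (0:ℝ) ≤ x - α), hαx.le]
    have hnn := hv_nonneg x ⟨hαx.le, hxω.le⟩
    nlinarith
  have hLz : L = 0 := le_antisymm hL0 hLnn
  rw [hLz] at hL
  clear hLnn hL0
  -- Step 1 : nontrivial point
  obtain ⟨t0, ht0mem, ht0⟩ := hv_nontriv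
  have ht0pos : 0 < v t0 := (hv_nonneg t0 ⟨ht0mem.1.le, ht0mem.2.le⟩).lt_of_ne (Ne.symm ht0)
  -- Step 2 : last zero β before t0
  set Z : Set ℝ := Icc α t0 ∩ v ⁻¹' {0} with hZ
  have hZα : α ∈ Z := ⟨⟨le_rfl, ht0mem.1.le⟩, hvα⟩
  have hZclosed : IsClosed Z :=
    (hv_cont.mono (Icc_subset_Icc le_rfl ht0mem.2.le)).preimage_isClosed_of_isClosed
      isClosed_Icc isClosed_singleton
  have hZbdd : BddAbove Z := (bddAbove_Icc (a := α) (b := t0)).mono inter_subset_left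
  set β : ℝ := sSup Z with hβ
  have hβZ : β ∈ Z := hZclosed.csSup_mem ⟨α, hZα⟩ hZbdd
  have hvβ : v β = 0 := hβZ.2
  have hαβ : α ≤ β := hβZ.1.1
  have hβt0 : β < t0 := lt_of_le_of_ne hβZ.1.2 (fun h => ht0 (by rw [← h]; exact hvβ))
  have hβω : β < ω := hβt0.trans ht0mem.2
  have hvpos : ∀ x, β < x → x ≤ t0 → 0 < v x := by
    intro x h1 h2
    have hxmem : x ∈ Icc α ω := ⟨(hαβ.trans h1.le), h2.trans ht0mem.2.le⟩
    rcases (hv_nonneg x hxmem).lt_or_eq with h | h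
    · exact h
    · exfalso
      have : x ∈ Z := ⟨⟨hxmem.1, h2⟩, h.symm⟩
      exact absurd (le_csSup hZbdd this) (not_le.mpr h1)
  -- Step 3 : v' tends to 0 from the right of β
  have hv'limβ : Tendsto v' (𝓝[>] β) (𝓝 0) := by
    rcases eq_or_lt_of_le hαβ with heq | hlt
    · rw [← heq]; exact hL
    · have hβIoo : β ∈ Ioo α ω := ⟨hlt, hβω⟩
      have hmin : IsLocalMin v β := by
        have hIccnhds : Icc α ω ∈ 𝓝 β := Icc_mem_nhds hlt hβω
        refine Filter.eventually_of_mem hIccnhds fun x hx => ?_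
        rw [hvβ]; exact hv_nonneg x hx
      have hv'β : v' β = 0 := hmin.hasDerivAt_eq_zero (hv_deriv β hβIoo)
      have h1 : ContinuousWithinAt v' (Ioo β ω) β :=
        (hv'_cont β hβIoo).mono (fun x hx => ⟨hlt.trans hx.1, hx.2⟩)
      have h2 := h1.tendsto
      rw [nhdsWithin_Ioo_eq_nhdsGT hβω, hv'β] at h2
      exact h2
  have hvtendβ : Tendsto v (𝓝[>] β) (𝓝 0) := by
    have h1 : ContinuousWithinAt v (Ioo β ω) β :=
      (hv_cont β ⟨hαβ, hβω.le⟩).mono (fun x hx => ⟨hαβ.trans hx.1.le, hx.2.le⟩)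
    have h2 := h1.tendsto
    rw [nhdsWithin_Ioo_eq_nhdsGT hβω, hvβ] at h2
    exact h2
  -- Step 4 : unpack condition (G)
  obtain ⟨ε, hε, G, G', hG'int, hGrep, hGae, hGcases⟩ := hG
  -- Step 5 : choice of t1
  have hsmall : ∀ᶠ x in 𝓝[>] β, |v' x| < ε ∧ v x < ε := by
    have h1 : ∀ᶠ x in 𝓝[>] β, |v' x| < ε := by
      have := hv'limβ.abs
      rw [abs_zero] at this
      exact this.eventually (eventually_lt_nhds hε)
    have h2 : ∀ᶠ x in 𝓝[>] β, v x < ε := hvtendβ.eventually (eventually_lt_nhds hε)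
    exact h1.and h2
  obtain ⟨u1, hu1, hu1sub⟩ := mem_nhdsGT_iff_exists_Ioo_subset.mp hsmall
  have hβu1 : β < u1 := hu1
  set t1 : ℝ := min ((β + u1) / 2) ((β + t0) / 2) with ht1
  have hβt1 : β < t1 := lt_min (by linarith) (by linarith)
  have ht1u1 : t1 < u1 := (min_le_left _ _).trans_lt (by linarith)
  have ht1t0 : t1 < t0 := (min_le_right _ _).trans_lt (by linarith)
  have ht1ω : t1 < ω := ht1t0.trans ht0mem.2
  have ht1P : ∀ x, β < x → x ≤ t1 → 0 < v x ∧ v x ≤ ε ∧ |v' x| ≤ ε := by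
    intro x h1 h2
    have hmem : x ∈ Ioo β u1 := ⟨h1, lt_of_le_of_lt h2 ht1u1⟩
    obtain ⟨ha, hb⟩ := hu1sub hmem
    exact ⟨hvpos x h1 (h2.trans ht1t0.le), hb.le, ha.le⟩
  -- Step 6 : a.e. differential inequalities on (β, t1)
  have hae : ∀ᵐ x ∂volume, x ∈ Ioc β t1 → 0 ≤ v'' x ∧ v'' x ≤ G' (v x) := by
    filter_upwards [hode, hGae] with x h1 h2 hx
    have hxIoo : x ∈ Ioo α ω := ⟨hαβ.trans_lt hx.1, lt_of_le_of_lt hx.2 ht1ω⟩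
    obtain ⟨h3, h4, h5⟩ := ht1P x hx.1 hx.2
    have h6 := h2 hxIoo h3 h4 h5
    rw [h1 hxIoo]
    exact h6
  -- Step 7 : v' is monotone on (β, t1]
  have hv'mono : ∀ c x, β < c → c ≤ x → x ≤ t1 → v' c ≤ v' x := by
    intro c x h1 h2 h3
    obtain ⟨hint'', hftc⟩ := hv'_locAC c t1 (hαβ.trans_lt h1) (h2.trans h3) ht1ω
    have h4 := hftc x ⟨h2, h3⟩
    rw [intervalIntegral.integral_of_le h2] at h4
    have h5 : (0:ℝ) ≤ ∫ s in Ioc c x, v'' s := by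
      refine setIntegral_nonneg_of_ae_restrict ?_
      filter_upwards [ae_restrict_of_ae hae, ae_restrict_mem measurableSet_Ioc] with s hs1 hs2
      exact (hs1 ⟨h1.trans hs2.1, hs2.2.trans h3⟩).1
    linarith
  -- Step 8 : v' nonnegative on (β, t1]
  have hv'nonneg : ∀ x, β < x → x ≤ t1 → 0 ≤ v' x := by
    intro x h1 h2
    refine le_of_tendsto hv'limβ ?_
    filter_upwards [Ioc_mem_nhdsGT h1] with c hc
    exact hv'mono c x hc.1 hc.2 h2
  -- Step 9 : v monotone on [β, t1]
  have hvmono : ∀ a b, β ≤ a → a ≤ b → b ≤ t1 → v a ≤ v b := by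
    intro a b ha hab hb
    have h1 := hvdiff a b (hαβ.trans ha) hab (lt_of_le_of_lt hb ht1ω)
    have h2 : (0:ℝ) ≤ ∫ s in Ioc a b, v' s :=
      setIntegral_nonneg measurableSet_Ioc fun s hs =>
        hv'nonneg s (ha.trans_lt hs.1) (hs.2.trans hb)
    linarith
  -- Step 10 : change-of-variables package
  have hCoVfull : ∀ t, β < t → t ≤ t1 → ∀ g0 : ℝ → ℝ,
      (IntegrableOn (fun x => v' x * g0 (v x)) (Ioo β t) ↔ IntegrableOn g0 (Ioo 0 (v t))) ∧
        (∫ x in Ioo β t, v' x * g0 (v x)) = ∫ r in Ioo 0 (v t), g0 r := by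
    intro t h1 h2 g0
    refine change_var h1 (fun x hx => hv_deriv x
        ⟨hαβ.trans_lt hx.1, hx.2.trans (lt_of_le_of_lt h2 ht1ω)⟩)
      (hv'_cont.mono fun x hx => ⟨hαβ.trans_lt hx.1, hx.2.trans (lt_of_le_of_lt h2 ht1ω)⟩)
      (fun x hx => hv'nonneg x hx.1 (hx.2.trans h2))
      (fun x hx => hvpos x hx.1 ((hx.2.trans h2).trans ht1t0.le))
      hvβ
      (hv_cont.mono fun x hx => ⟨hαβ.trans hx.1, hx.2.trans ((h2.trans ht1ω.le))⟩)
      (hv'_int.mono_set fun x hx => ⟨hαβ.trans_lt hx.1, lt_of_le_of_lt (hx.2.trans h2) ht1ω⟩)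
      (fun a b ha hab hb => hvdiff a b (hαβ.trans ha) hab (lt_of_le_of_lt (hb.trans h2) ht1ω))
      g0
  -- value of ∫ v' G'(v) over (β, t)
  have hHv : ∀ t, β < t → t ≤ t1 →
      IntegrableOn (fun x => v' x * G' (v x)) (Ioo β t) ∧
        (∫ x in Ioo β t, v' x * G' (v x)) = G (v t) - G 0 := by
    intro t h1 h2
    obtain ⟨h3, h4, h5⟩ := ht1P t h1 h2
    have hiff := (hCoVfull t h1 h2 G').1
    have hval := (hCoVfull t h1 h2 G').2
    have hsub : Ioo 0 (v t) ⊆ Icc 0 ε := fun r hr => ⟨hr.1.le, hr.2.le.trans h4⟩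
    have hint : IntegrableOn G' (Ioo 0 (v t)) := hG'int.mono_set hsub
    refine ⟨hiff.mpr hint, ?_⟩
    rw [hval, ← integral_Ioc_eq_integral_Ioo]
    have h6 := hGrep (v t) ⟨h3.le, h4⟩
    rw [intervalIntegral.integral_of_le h3.le] at h6
    linarith
  -- a.e. nonnegativity of v'·G'(v) on (β, t1)
  have haeprod : ∀ᵐ x ∂volume, x ∈ Ioc β t1 → 0 ≤ v' x * G' (v x) := by
    filter_upwards [hae] with x hx hmem
    exact mul_nonneg (hv'nonneg x hmem.1 hmem.2)
      (le_trans (hx hmem).1 (hx hmem).2)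
  have haeprodr : ∀ t, t ≤ t1 →
      (0:ℝ → ℝ) ≤ᵐ[volume.restrict (Ioo β t)] fun x => v' x * G' (v x) := by
    intro t h2
    filter_upwards [ae_restrict_of_ae haeprod, ae_restrict_mem measurableSet_Ioo] with x h1 hx
    exact h1 ⟨hx.1, hx.2.le.trans h2⟩
  -- attained values
  have hattain : ∀ s, 0 < s → s ≤ v t1 → ∃ x, (β < x ∧ x ≤ t1) ∧ v x = s := by
    intro s h1 h2
    rcases eq_or_lt_of_le h2 with h | h
    · exact ⟨t1, ⟨hβt1, le_rfl⟩, h.symm⟩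
    · have h3 := intermediate_value_Ioo hβt1.le
        (hv_cont.mono (Icc_subset_Icc hαβ ht1ω.le))
      rw [hvβ] at h3
      obtain ⟨x, hx, hvx⟩ := h3 ⟨h1, h⟩
      exact ⟨x, ⟨hx.1, hx.2.le⟩, hvx⟩
  -- monotonicity of H on (0, v t1]
  have hHmono : ∀ s1 s2, 0 < s1 → s1 ≤ s2 → s2 ≤ v t1 → G s1 - G 0 ≤ G s2 - G 0 := by
    intro s1 s2 h1 h12 h2
    obtain ⟨a, ⟨ha1, ha2⟩, hva⟩ := hattain s1 h1 (h12.trans h2)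
    obtain ⟨b, ⟨hb1, hb2⟩, hvb⟩ := hattain s2 (h1.trans_le h12) h2
    rcases le_total a b with hab | hab
    · rw [← hva, ← hvb, ← (hHv a ha1 ha2).2, ← (hHv b hb1 hb2).2]
      refine setIntegral_mono_set (hHv b hb1 hb2).1 (haeprodr b hb2) ?_
      exact HasSubset.Subset.eventuallyLE (Ioo_subset_Ioo_right hab)
    · have : s2 ≤ s1 := by rw [← hva, ← hvb]; exact hvmono b a hb1.le hab ha2
      have heq : s1 = s2 := le_antisymm h12 this
      rw [heq]
  have hH0 : ∀ s, 0 < s → s ≤ v t1 → 0 ≤ G s - G 0 := by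
    intro s h1 h2
    obtain ⟨a, ⟨ha1, ha2⟩, hva⟩ := hattain s h1 h2
    rw [← hva, ← (hHv a ha1 ha2).2]
    exact setIntegral_nonneg_of_ae_restrict (haeprodr a ha2)
  -- Step 11 : energy estimate
  have hE : ∀ t, β < t → t ≤ t1 → (v' t)^2 ≤ 2 * (G (v t) - G 0) := by
    intro t hβt htt1
    have key : ∀ c ∈ Ioo β t, (v' t)^2 ≤ (v' c)^2 + 2 * (G (v t) - G 0) := by
      intro c hc
      have hαc : α < c := hαβ.trans_lt hc.1
      have hct : c ≤ t := hc.2.le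
      obtain ⟨hint'', hftc⟩ := hv'_locAC c t1 hαc (hct.trans htt1) ht1ω
      have hIocsub : Ioc c t ⊆ Icc c t1 := fun s hs => ⟨hs.1.le, hs.2.trans htt1⟩
      have hfint : IntegrableOn v'' (Ioc c t) := hint''.mono_set hIocsub
      have hsq := sq_setIntegral_Ioc hct hfint
      have hFrep : ∀ u ∈ Ioc c t, (∫ s in Ioc c u, v'' s) = v' u - v' c := by
        intro u hu
        have h0 := hftc u ⟨hu.1.le, hu.2.trans htt1⟩
        rw [intervalIntegral.integral_of_le hu.1.le] at h0
        linarith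
      have hTrep : (∫ s in Ioc c t, v'' s) = v' t - v' c := hFrep t ⟨hc.2, le_rfl⟩
      have hcongr : (∫ u in Ioc c t, v'' u * ∫ s in Ioc c u, v'' s)
          = ∫ u in Ioc c t, (v' u - v' c) * v'' u := by
        refine setIntegral_congr_fun measurableSet_Ioc fun u hu => ?_
        rw [hFrep u hu]; ring
      have hv'contc : ContinuousOn v' (Icc c t) :=
        hv'_cont.mono (fun s hs => ⟨hαc.trans_le hs.1, lt_of_le_of_lt (hs.2.trans htt1) ht1ω⟩)
      have hv'meas : AEStronglyMeasurable v' (volume.restrict (Ioc c t)) :=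
        (hv'contc.mono Ioc_subset_Icc_self).aestronglyMeasurable measurableSet_Ioc
      obtain ⟨M, hM⟩ := (isCompact_Icc (a := c) (b := t)).exists_bound_of_continuousOn hv'contc
      have hbound : ∀ᵐ u ∂(volume.restrict (Ioc c t)), ‖v' u - v' c‖ ≤ M + ‖v' c‖ := by
        filter_upwards [ae_restrict_mem measurableSet_Ioc] with u hu
        calc ‖v' u - v' c‖ ≤ ‖v' u‖ + ‖v' c‖ := norm_sub_le _ _
          _ ≤ M + ‖v' c‖ := by
              have := hM u (Ioc_subset_Icc_self hu); linarith
      have hint1 : IntegrableOn (fun u => (v' u - v' c) * v'' u) (Ioc c t) :=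
        Integrable.bdd_mul hfint (hv'meas.sub aestronglyMeasurable_const) hbound
      have hbound2 : ∀ᵐ u ∂(volume.restrict (Ioc c t)), ‖v' u‖ ≤ M := by
        filter_upwards [ae_restrict_mem measurableSet_Ioc] with u hu
        exact hM u (Ioc_subset_Icc_self hu)
      have hint2 : IntegrableOn (fun u => v' u * v'' u) (Ioc c t) :=
        Integrable.bdd_mul hfint hv'meas hbound2
      have hsplit : (∫ u in Ioc c t, (v' u - v' c) * v'' u)
          = (∫ u in Ioc c t, v' u * v'' u) - v' c * (v' t - v' c) := by
        have h1 : (fun u => (v' u - v' c) * v'' u)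
            = fun u => v' u * v'' u - v' c * v'' u := by
          funext u; ring
        rw [h1, integral_sub hint2 (hfint.const_mul (v' c)), integral_const_mul, hTrep]
      have hIoosub : Ioo c t ⊆ Ioo β t := Ioo_subset_Ioo_left hc.1.le
      have hXle : (∫ u in Ioc c t, v' u * v'' u) ≤ G (v t) - G 0 := by
        have e1 : (∫ u in Ioc c t, v' u * v'' u) = ∫ u in Ioo c t, v' u * v'' u :=
          integral_Ioc_eq_integral_Ioo
        have hmono1 : (∫ u in Ioo c t, v' u * v'' u) ≤ ∫ u in Ioo c t, v' u * G' (v u) := by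
          refine integral_mono_ae (hint2.mono_set Ioo_subset_Ioc_self)
            (((hHv t hβt htt1).1).mono_set hIoosub) ?_
          filter_upwards [ae_restrict_of_ae hae, ae_restrict_mem measurableSet_Ioo] with u h1 h2
          have h3 : u ∈ Ioc β t1 := ⟨hc.1.trans h2.1, h2.2.le.trans htt1⟩
          exact mul_le_mul_of_nonneg_left (h1 h3).2 (hv'nonneg u h3.1 h3.2)
        have hmono2 : (∫ u in Ioo c t, v' u * G' (v u)) ≤ ∫ u in Ioo β t, v' u * G' (v u) := by
          refine setIntegral_mono_set ((hHv t hβt htt1).1) (haeprodr t htt1) ?_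
          exact HasSubset.Subset.eventuallyLE hIoosub
        have hval := (hHv t hβt htt1).2
        rw [e1]
        linarith
      rw [hTrep, hcongr, hsplit] at hsq
      nlinarith [hsq, hXle]
    have h0 : Tendsto (fun c => (v' c)^2) (𝓝[>] β) (𝓝 0) := by
      simpa using hv'limβ.pow 2
    have hlim : Tendsto (fun c => (v' c)^2 + 2 * (G (v t) - G 0)) (𝓝[>] β)
        (𝓝 (0 + 2 * (G (v t) - G 0))) := h0.add_const _
    have hev : ∀ᶠ c in 𝓝[>] β, (v' t)^2 ≤ (v' c)^2 + 2 * (G (v t) - G 0) := by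
      filter_upwards [Ioo_mem_nhdsGT_of_mem ⟨le_rfl, hβt⟩] with c hc using key c hc
    have := ge_of_tendsto hlim hev
    linarith
  -- Step 12 : the degenerate case (vanishing H)
  have subcaseA : ∀ s0, 0 < s0 → s0 ≤ v t1 → G s0 - G 0 = 0 → False := by
    intro s0 hs0 hs0le hHz
    have hz : ∀ x, β < x → x ≤ t1 → v x ≤ s0 → v' x = 0 := by
      intro x h1 h2 h3
      have h4 := hE x h1 h2
      have h5 : G (v x) - G 0 ≤ 0 := by
        have := hHmono (v x) s0 (hvpos x h1 (h2.trans ht1t0.le)) h3 hs0le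
        linarith
      have h6 := sq_nonneg (v' x)
      have h7 : (v' x)^2 = 0 := le_antisymm (by linarith) h6
      exact (pow_eq_zero_iff two_ne_zero).mp h7
    set S : Set ℝ := Icc β t1 ∩ v ⁻¹' (Iic s0) with hS
    have hSclosed : IsClosed S :=
      (hv_cont.mono (Icc_subset_Icc hαβ ht1ω.le)).preimage_isClosed_of_isClosed
        isClosed_Icc isClosed_Iic
    have hSbdd : BddAbove S := (bddAbove_Icc (a := β) (b := t1)).mono inter_subset_left
    have hSβ : β ∈ S := ⟨⟨le_rfl, hβt1.le⟩, by simp only [mem_preimage, mem_Iic, hvβ]; exact hs0.le⟩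
    set τ : ℝ := sSup S with hτ
    have hτS : τ ∈ S := hSclosed.csSup_mem ⟨β, hSβ⟩ hSbdd
    have hβτ : β < τ := by
      have hev1 : ∀ᶠ x in 𝓝[>] β, v x < s0 := hvtendβ.eventually (eventually_lt_nhds hs0)
      have hev2 : ∀ᶠ x in 𝓝[>] β, x ∈ Ioo β t1 :=
        eventually_of_mem (Ioo_mem_nhdsGT_of_mem ⟨le_rfl, hβt1⟩) (fun y hy => hy)
      obtain ⟨x, hx1, hx2⟩ := (hev1.and hev2).exists
      exact lt_of_lt_of_le hx2.1 (le_csSup hSbdd ⟨⟨hx2.1.le, hx2.2.le⟩, hx1.le⟩)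
    have hv'z : ∀ x, β < x → x ≤ τ → v' x = 0 := by
      intro x h1 h2
      exact hz x h1 (h2.trans hτS.1.2) ((hvmono x τ h1.le h2 hτS.1.2).trans hτS.2)
    have hvτ : v τ = 0 := by
      have hconst : ∀ᶠ c in 𝓝[>] β, v τ - v c = 0 := by
        filter_upwards [Ioo_mem_nhdsGT_of_mem ⟨le_rfl, hβτ⟩] with c hc
        have h1 := hvdiff c τ (hαβ.trans hc.1.le) hc.2.le (lt_of_le_of_lt hτS.1.2 ht1ω)
        have h2 : (∫ s in Ioc c τ, v' s) = 0 := by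
          rw [setIntegral_congr_fun measurableSet_Ioc
            (fun s hs => hv'z s (hc.1.trans hs.1) hs.2)]
          simp
        linarith
      have ht1' : Tendsto (fun c => v τ - v c) (𝓝[>] β) (𝓝 (v τ - 0)) :=
        tendsto_const_nhds.sub hvtendβ
      have ht2' : Tendsto (fun c => v τ - v c) (𝓝[>] β) (𝓝 0) :=
        Tendsto.congr' (hconst.mono fun c h => h.symm) tendsto_const_nhds
      have := tendsto_nhds_unique ht1' ht2'
      linarith
    exact absurd hvτ (ne_of_gt (hvpos τ hβτ (hτS.1.2.trans ht1t0.le)))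
  -- Step 13 : continuity of G and sign of G 0
  have hGcont : ContinuousOn G (Icc 0 ε) := by
    have hprim : ContinuousOn (fun s => ∫ r in Ioc 0 s, G' r) (Icc 0 ε) :=
      intervalIntegral.continuousOn_primitive hG'int
    have h2 : ContinuousOn (fun s => G 0 + ∫ r in Ioc 0 s, G' r) (Icc 0 ε) :=
      continuousOn_const.add hprim
    refine h2.congr ?_
    intro s hs
    have h0 := hGrep s hs
    rw [intervalIntegral.integral_of_le hs.1] at h0
    exact h0
  haveI hneb : (𝓝[Ioc (0:ℝ) ε] (0:ℝ)).NeBot := by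
    rw [nhdsWithin_Ioc_eq_nhdsGT hε]
    infer_instance
  have hG0tend : Tendsto G (𝓝[Ioc (0:ℝ) ε] 0) (𝓝 (G 0)) :=
    ((hGcont 0 ⟨le_rfl, hε.le⟩).mono Ioc_subset_Icc_self).tendsto
  have hvt1pos : 0 < v t1 := hvpos t1 hβt1 ht1t0.le
  have hvt1ε : v t1 ≤ ε := (ht1P t1 hβt1 le_rfl).2.1
  -- Step 14 : dichotomy
  rcases hGcases with hcase1 | ⟨hpos, hnint⟩
  · have hG00 : G 0 = 0 := by
      have h2 : Tendsto G (𝓝[Ioc (0:ℝ) ε] 0) (𝓝 0) := by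
        refine Tendsto.congr' ?_ tendsto_const_nhds
        filter_upwards [self_mem_nhdsWithin] with s hs
        exact (hcase1 s hs).symm
      exact tendsto_nhds_unique hG0tend h2
    refine subcaseA (v t1) hvt1pos le_rfl ?_
    rw [hcase1 (v t1) ⟨hvt1pos, hvt1ε⟩, hG00]
    ring
  · have hG0nn : 0 ≤ G 0 :=
      ge_of_tendsto hG0tend (by
        filter_upwards [self_mem_nhdsWithin] with s hs
        exact (hpos s hs).le)
    by_cases hzero : ∃ s0, 0 < s0 ∧ s0 ≤ v t1 ∧ G s0 - G 0 = 0
    · obtain ⟨s0, h1, h2, h3⟩ := hzero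
      exact subcaseA s0 h1 h2 h3
    · push_neg at hzero
      have hHpos : ∀ s, 0 < s → s ≤ v t1 → 0 < G s - G 0 := fun s h1 h2 =>
        (hH0 s h1 h2).lt_of_ne (Ne.symm (hzero s h1 h2))
      set g0 : ℝ → ℝ := fun r => (Real.sqrt (2 * (G r - G 0)))⁻¹ with hg0
      have hvxle : ∀ x, β < x → x ≤ t1 → v x ≤ v t1 := fun x h1 h2 =>
        hvmono x t1 h1.le h2 le_rfl
      have hbd : ∀ x ∈ Ioo β t1, ‖v' x * g0 (v x)‖ ≤ 1 := by
        intro x hx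
        have h1 : 0 < v x := hvpos x hx.1 (hx.2.le.trans ht1t0.le)
        have h2 : v x ≤ v t1 := hvxle x hx.1 hx.2.le
        have hH := hHpos (v x) h1 h2
        have hsqpos : 0 < Real.sqrt (2 * (G (v x) - G 0)) :=
          Real.sqrt_pos.mpr (by linarith)
        have hv'le : v' x ≤ Real.sqrt (2 * (G (v x) - G 0)) := by
          have h3 := hE x hx.1 hx.2.le
          have h4 := hv'nonneg x hx.1 hx.2.le
          nlinarith [Real.sq_sqrt (by linarith : (0:ℝ) ≤ 2 * (G (v x) - G 0)),
            Real.sqrt_nonneg (2 * (G (v x) - G 0))]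
        have hnn : 0 ≤ v' x * g0 (v x) :=
          mul_nonneg (hv'nonneg x hx.1 hx.2.le) (inv_nonneg.mpr hsqpos.le)
        rw [Real.norm_eq_abs, abs_of_nonneg hnn]
        simp only [hg0]
        rw [← div_eq_mul_inv]
        exact (div_le_one hsqpos).mpr hv'le
      have hGvcont : ContinuousOn (fun x => G (v x) - G 0) (Ioo β t1) := by
        refine (ContinuousOn.comp hGcont (hv_cont.mono ?_) ?_).sub continuousOn_const
        · exact fun x hx => ⟨hαβ.trans hx.1.le, hx.2.le.trans ht1ω.le⟩
        · intro x hx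
          exact ⟨(hvpos x hx.1 (hx.2.le.trans ht1t0.le)).le, (ht1P x hx.1 hx.2.le).2.1⟩
      have hg0cont : ContinuousOn (fun x => g0 (v x)) (Ioo β t1) := by
        simp only [hg0]
        refine ContinuousOn.inv₀ (Real.continuous_sqrt.comp_continuousOn
          (continuousOn_const.mul hGvcont)) ?_
        intro x hx
        refine ne_of_gt (Real.sqrt_pos.mpr ?_)
        have := hHpos (v x) (hvpos x hx.1 (hx.2.le.trans ht1t0.le)) (hvxle x hx.1 hx.2.le)
        linarith
      have hmeas1 : AEStronglyMeasurable (fun x => v' x * g0 (v x))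
          (volume.restrict (Ioo β t1)) :=
        ((hv'_cont.mono (fun x hx => ⟨hαβ.trans_lt hx.1, hx.2.trans ht1ω⟩)).mul
          hg0cont).aestronglyMeasurable measurableSet_Ioo
      have hint1 : IntegrableOn (fun x => v' x * g0 (v x)) (Ioo β t1) := by
        refine Integrable.mono' (g := fun _ => (1:ℝ)) ?_ hmeas1 ?_
        · exact (integrableOn_const_iff enorm_ne_top).mpr (Or.inr measure_Ioo_lt_top)
        · filter_upwards [ae_restrict_mem measurableSet_Ioo] with x hx
          exact hbd x hx
      have hint2 : IntegrableOn g0 (Ioo 0 (v t1)) := (hCoVfull t1 hβt1 le_rfl g0).1.mp hint1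
      have hGscont : ContinuousOn (fun s => 1 / Real.sqrt (G s)) (Ioo 0 (v t1)) := by
        have hsubIcc : Ioo (0:ℝ) (v t1) ⊆ Icc 0 ε := fun r hr => ⟨hr.1.le, hr.2.le.trans hvt1ε⟩
        refine continuousOn_const.div
          (Real.continuous_sqrt.comp_continuousOn (hGcont.mono hsubIcc)) ?_
        intro s hs
        exact ne_of_gt (Real.sqrt_pos.mpr (hpos s ⟨hs.1, hs.2.le.trans hvt1ε⟩))
      have hint3 : IntegrableOn (fun s => 1 / Real.sqrt (G s)) (Ioo 0 (v t1)) := by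
        refine Integrable.mono' (hint2.const_mul (Real.sqrt 2))
          (hGscont.aestronglyMeasurable measurableSet_Ioo) ?_
        filter_upwards [ae_restrict_mem measurableSet_Ioo] with s hs
        have h1 : 0 < s := hs.1
        have h2 : s ≤ v t1 := hs.2.le
        have hHs := hHpos s h1 h2
        have hGs : 0 < G s := hpos s ⟨h1, h2.trans hvt1ε⟩
        have hs1 : Real.sqrt (G s - G 0) ≤ Real.sqrt (G s) :=
          Real.sqrt_le_sqrt (by linarith)
        have hs2 : 0 < Real.sqrt (G s - G 0) := Real.sqrt_pos.mpr hHs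
        have hs3 : 0 < Real.sqrt (G s) := Real.sqrt_pos.mpr hGs
        have hnorm : ‖1 / Real.sqrt (G s)‖ = 1 / Real.sqrt (G s) := by
          rw [Real.norm_eq_abs, abs_of_pos (by positivity)]
        rw [hnorm]
        have hrw : Real.sqrt 2 * g0 s = 1 / Real.sqrt (G s - G 0) := by
          simp only [hg0]
          rw [Real.sqrt_mul (by norm_num : (0:ℝ) ≤ 2), mul_inv, ← mul_assoc,
            mul_inv_cancel₀ (ne_of_gt (Real.sqrt_pos.mpr (by norm_num : (0:ℝ) < 2))),
            one_mul, one_div]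
        rw [hrw]
        exact one_div_le_one_div_of_le hs2 hs1
      have hint4 : IntegrableOn (fun s => 1 / Real.sqrt (G s)) (Icc (v t1) ε) := by
        refine ContinuousOn.integrableOn_Icc ?_
        refine continuousOn_const.div (Real.continuous_sqrt.comp_continuousOn
          (hGcont.mono (Icc_subset_Icc hvt1pos.le le_rfl))) ?_
        intro s hs
        exact ne_of_gt (Real.sqrt_pos.mpr (hpos s ⟨hvt1pos.trans_le hs.1, hs.2⟩))
      have hfin : IntegrableOn (fun s => 1 / Real.sqrt (G s)) (Ioc 0 ε) := by
        refine (hint3.union hint4).mono_set ?_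
        intro s hs
        by_cases h : s < v t1
        · exact Or.inl ⟨hs.1, h⟩
        · exact Or.inr ⟨not_lt.mp h, hs.2⟩
      exact hnint hfin
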